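/- Let Ω ⊊ ℝⁿ be an E-thick domain whose boundary ∂Ω is porous (satisfies the ball condition). Then Ω is E-porous. -/

import Mathlib

open Metric MeasureTheory Set

/-- The infimal Euclidean distance between two sets. -/
noncomputable def setDist {n : ℕ} (A B : Set (EuclideanSpace ℝ (Fin n))) : ℝ :=
  sInf (Set.image2 dist A B)

/-- `Q` is an open axis-parallel cube of side length `l`. -/
def IsCube {n : ℕ} (Q : Set (EuclideanSpace ℝ (Fin n))) (l : ℝ) : Prop :=
  0 < l ∧ ∃ a : EuclideanSpace ℝ (Fin n),
    Q = {y : EuclideanSpace ℝ (Fin n) | ∀ i, y i ∈ Set.Ioo (a i) (a i + l)}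

/-- Ω is E-thick (exterior thick) in the sense of Triebel. -/
def EThick {n : ℕ} (Ω : Set (EuclideanSpace ℝ (Fin n))) : Prop :=
  ∀ c₁ c₂ c₃ c₄ : ℝ, 0 < c₁ → 0 < c₂ → 0 < c₃ → 0 < c₄ → ∀ j₀ : ℕ,
    ∃ c₅ c₆ c₇ c₈ : ℝ, 0 < c₅ ∧ 0 < c₆ ∧ 0 < c₇ ∧ 0 < c₈ ∧
      ∀ j : ℕ, j₀ ≤ j → ∀ (Qi : Set (EuclideanSpace ℝ (Fin n))) (li : ℝ),
        IsCube Qi li → Qi ⊆ Ω →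
        c₁ * 2 ^ (-(j : ℤ)) ≤ li → li ≤ c₂ * 2 ^ (-(j : ℤ)) →
        c₃ * 2 ^ (-(j : ℤ)) ≤ setDist Qi (frontier Ω) →
        setDist Qi (frontier Ω) ≤ c₄ * 2 ^ (-(j : ℤ)) →
        ∃ (Qe : Set (EuclideanSpace ℝ (Fin n))) (l' : ℝ),
          IsCube Qe l' ∧ Qe ⊆ Ωᶜ ∧
          c₅ * 2 ^ (-(j : ℤ)) ≤ l' ∧ l' ≤ c₆ * 2 ^ (-(j : ℤ)) ∧
          c₇ * 2 ^ (-(j : ℤ)) ≤ setDist Qe (frontier Ω) ∧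
          setDist Qe (frontier Ω) ≤ setDist Qi Qe ∧
          setDist Qi Qe ≤ c₈ * 2 ^ (-(j : ℤ))

/-- A closed set F ⊆ ℝⁿ is porous (satisfies the ball condition). -/
def IsPorousSet {n : ℕ} (F : Set (EuclideanSpace ℝ (Fin n))) : Prop :=
  ∃ η : ℝ, 0 < η ∧ η < 1 ∧
    ∀ x : EuclideanSpace ℝ (Fin n), ∀ r : ℝ, 0 < r → r < 1 →
      ∃ y : EuclideanSpace ℝ (Fin n),
        Metric.closedBall y (η * r) ⊆ Metric.closedBall x r ∧
        Metric.closedBall y (η * r) ∩ F = ∅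

/-- A domain Ω ⊊ ℝⁿ is E-porous. -/
def EPorous {n : ℕ} (Ω : Set (EuclideanSpace ℝ (Fin n))) : Prop :=
  ∃ η : ℝ, 0 < η ∧ η < 1 ∧
    ∀ x ∈ frontier Ω, ∀ r : ℝ, 0 < r → r < 1 →
      ∃ y : EuclideanSpace ℝ (Fin n),
        Metric.closedBall y (η * r) ⊆ Metric.closedBall x r ∧
        Metric.closedBall y (η * r) ∩ closure Ω = ∅

lemma setDist_le_dist {n : ℕ} {A B : Set (EuclideanSpace ℝ (Fin n))} {a b : EuclideanSpace ℝ (Fin n)}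
    (ha : a ∈ A) (hb : b ∈ B) : setDist A B ≤ dist a b :=
  csInf_le ⟨0, by rintro _ ⟨p, hp, q, hq, rfl⟩; exact dist_nonneg⟩
    (Set.mem_image2_of_mem ha hb)

lemma le_setDist {n : ℕ} {A B : Set (EuclideanSpace ℝ (Fin n))} {m : ℝ}
    (hA : A.Nonempty) (hB : B.Nonempty)
    (h : ∀ a ∈ A, ∀ b ∈ B, m ≤ dist a b) : m ≤ setDist A B :=
  le_csInf (hA.image2 hB) (by rintro _ ⟨p, hp, q, hq, rfl⟩; exact h p hp q hq)

lemma exists_dist_lt {n : ℕ} {A B : Set (EuclideanSpace ℝ (Fin n))} {c : ℝ}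
    (hA : A.Nonempty) (hB : B.Nonempty) (h : setDist A B < c) :
    ∃ a ∈ A, ∃ b ∈ B, dist a b < c := by
  obtain ⟨d, hd, hdc⟩ := (csInf_lt_iff
    ⟨0, by rintro _ ⟨p, hp, q, hq, rfl⟩; exact dist_nonneg⟩ (hA.image2 hB)).1 h
  obtain ⟨p, hp, q, hq, rfl⟩ := hd
  exact ⟨p, hp, q, hq, hdc⟩

lemma aux_dist_le {n : ℕ} {x y : EuclideanSpace ℝ (Fin n)} {b : ℝ} (hb : 0 ≤ b)
    (h : ∀ i, |x i - y i| ≤ b) : dist x y ≤ n * b := by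
  have hnb : (0:ℝ) ≤ n * b := by positivity
  rw [EuclideanSpace.dist_eq]
  have h1 : ∑ i, dist (x i) (y i) ^ 2 ≤ ((n:ℝ) * b) ^ 2 := by
    have key : ∀ i : Fin n, dist (x i) (y i) ^ 2 ≤ b ^ 2 := by
      intro i
      rw [Real.dist_eq]
      have := h i
      nlinarith [abs_nonneg (x i - y i)]
    calc ∑ i, dist (x i) (y i) ^ 2 ≤ ∑ _i : Fin n, b ^ 2 :=
          Finset.sum_le_sum (fun i _ => key i)
      _ = (n:ℝ) * b ^ 2 := by
          simp [Finset.sum_const, Finset.card_univ]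
      _ ≤ ((n:ℝ) * b) ^ 2 := by
          have hn2 : (n:ℝ) ≤ (n:ℝ)^2 := by
            exact_mod_cast Nat.le_self_pow two_ne_zero n
          nlinarith [sq_nonneg b]
  calc Real.sqrt (∑ i, dist (x i) (y i) ^ 2) ≤ Real.sqrt (((n:ℝ)*b)^2) := Real.sqrt_le_sqrt h1
    _ = (n:ℝ)*b := Real.sqrt_sq hnb


set_option maxHeartbeats 1000000 in
/-- An E-thick domain Ω ⊊ ℝⁿ whose boundary is porous (satisfies
the ball condition) is E-porous. -/
theorem statement13
    (n : ℕ) (hn : 1 ≤ n)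
    (Ω : Set (EuclideanSpace ℝ (Fin n)))
    (hΩopen : IsOpen Ω) (hΩne : Ω.Nonempty) (hΩproper : Ω ≠ Set.univ)
    (hEthick : EThick Ω)
    (hporous : IsPorousSet (frontier Ω)) :
    EPorous Ω := by
  classical
  obtain ⟨η, hη0, hη1, hpor⟩ := hporous
  have hn1 : (1:ℝ) ≤ (n:ℝ) := by exact_mod_cast hn
  have hn0 : (0:ℝ) < (n:ℝ) := by linarith
  have hFne : (frontier Ω).Nonempty := by
    rw [nonempty_frontier_iff]; exact ⟨hΩne, hΩproper⟩
  have hfr : frontier Ω = closure Ω \ Ω := hΩopen.frontier_eq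
  have hcompl : ∀ p : EuclideanSpace ℝ (Fin n), p ∉ frontier Ω → p ∈ Ω ∪ (closure Ω)ᶜ := by
    intro p hp
    by_cases h : p ∈ closure Ω
    · left
      by_contra h2
      exact hp (hfr ▸ ⟨h, h2⟩)
    · right; exact h
  have hdisj : Disjoint Ω (closure Ω)ᶜ :=
    disjoint_compl_right.mono_left subset_closure
  obtain ⟨c₅, c₆, c₇, c₈, hc5, hc6, hc7, hc8, hP⟩ :=
    hEthick (η / (2*n)) 1 (η/4) 1 (by positivity) one_pos (by positivity) one_pos 0
  set C : ℝ := 2*((n:ℝ)*c₆ + 2*c₈ + 2) + c₇ with hCdef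
  have hC4 : 4 ≤ C := by nlinarith
  have hC0 : 0 < C := by linarith
  refine ⟨min (min (η/C) (c₇/(2*C))) (1/2), by positivity, ?_, ?_⟩
  · exact lt_of_le_of_lt (min_le_right _ _) (by norm_num)
  intro x hx r hr0 hr1
  set η' : ℝ := min (min (η/C) (c₇/(2*C))) (1/2) with hη'def
  have hη'0 : 0 < η' := by positivity
  set s : ℝ := r / C with hsdef
  have hs0 : 0 < s := by positivity
  have hsr : s ≤ r := by
    rw [hsdef, div_le_iff₀ hC0]; nlinarith
  have hs1 : s < 1 := lt_of_le_of_lt hsr hr1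
  have hCs : C * s = r := by rw [hsdef]; field_simp
  obtain ⟨y, hby, hbF⟩ := hpor x s hs0 hs1
  -- choose j with s ≤ 2^(-j) ≤ 2*s
  have hex : ∃ m : ℕ, (2:ℝ)^(-(m:ℤ)) < s := by
    obtain ⟨m, hm⟩ := exists_pow_lt_of_lt_one hs0 (by norm_num : (1/2:ℝ) < 1)
    refine ⟨m, ?_⟩
    rw [zpow_neg, zpow_natCast]
    rw [one_div, inv_pow] at hm
    exact hm
  have hk : (2:ℝ)^(-((Nat.find hex : ℕ) : ℤ)) < s := Nat.find_spec hex
  have hk0 : Nat.find hex ≠ 0 := by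
    intro h
    rw [h] at hk
    norm_num at hk
    linarith
  obtain ⟨j, hjk⟩ : ∃ j, Nat.find hex = j + 1 :=
    ⟨Nat.find hex - 1, (Nat.succ_pred_eq_of_pos (Nat.pos_of_ne_zero hk0)).symm⟩
  set δ : ℝ := (2:ℝ)^(-(j:ℤ)) with hδdef
  have hδ0 : 0 < δ := by positivity
  have hj1 : s ≤ δ := by
    by_contra hcon
    exact (Nat.find_min hex (by omega : j < Nat.find hex)) (lt_of_not_ge hcon)
  have hj2 : δ ≤ 2*s := by
    rw [hjk] at hk
    have he : (2:ℝ)^(-((j+1:ℕ):ℤ)) = δ / 2 := by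
      rw [hδdef]
      push_cast
      rw [neg_add, zpow_add₀ (by norm_num : (2:ℝ) ≠ 0)]
      norm_num
      ring
    rw [he] at hk
    linarith
  -- the interior cube
  set l : ℝ := η * s / n with hldef
  have hl0 : 0 < l := by positivity
  set Qi : Set (EuclideanSpace ℝ (Fin n)) :=
    {z : EuclideanSpace ℝ (Fin n) | ∀ i, z i ∈ Set.Ioo ((y i - l/2)) ((y i - l/2) + l)} with hQidef
  have hyQi : y ∈ Qi := by
    intro i
    constructor <;> [linarith; linarith]
  have hQiball : ∀ z ∈ Qi, dist z y ≤ η * s / 2 := by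
    intro z hz
    have hcoord : ∀ i, |z i - y i| ≤ l / 2 := by
      intro i
      obtain ⟨h1, h2⟩ := hz i
      rw [abs_le]
      constructor <;> linarith
    have := aux_dist_le (by positivity) hcoord
    calc dist z y ≤ (n:ℝ) * (l/2) := this
      _ = η * s / 2 := by rw [hldef]; field_simp
  have hdyx : dist y x ≤ s := by
    have : y ∈ closedBall x s := hby (mem_closedBall_self (by positivity))
    exact mem_closedBall.1 this
  have hyF : ∀ w ∈ frontier Ω, η * s < dist y w := by
    intro w hw
    by_contra hcon
    push_neg at hcon
    have : w ∈ closedBall y (η*s) ∩ frontier Ω := ⟨by rwa [mem_closedBall, dist_comm], hw⟩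
    rw [hbF] at this
    exact this
  by_cases hcase : closedBall y (η*s) ∩ closure Ω = ∅
  · -- exterior case: done directly
    refine ⟨y, ?_, ?_⟩
    · have h1 : η' * r ≤ η * s := by
        have : η' ≤ η / C := le_trans (min_le_left _ _) (min_le_left _ _)
        calc η' * r ≤ (η/C) * r := by nlinarith
          _ = η * s := by rw [hsdef]; ring
      exact subset_trans (closedBall_subset_closedBall h1)
        (subset_trans hby (closedBall_subset_closedBall hsr))
    · have h1 : η' * r ≤ η * s := by
        have : η' ≤ η / C := le_trans (min_le_left _ _) (min_le_left _ _)
        calc η' * r ≤ (η/C) * r := by nlinarith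
          _ = η * s := by rw [hsdef]; ring
      rw [Set.eq_empty_iff_forall_notMem]
      rintro p ⟨hp1, hp2⟩
      have hmem : p ∈ closedBall y (η*s) ∩ closure Ω :=
        ⟨closedBall_subset_closedBall h1 hp1, hp2⟩
      rw [hcase] at hmem
      exact hmem
  · -- interior case
    have hBne : (closedBall y (η*s) ∩ closure Ω).Nonempty := nonempty_iff_ne_empty.2 hcase
    have hballF : ∀ p ∈ closedBall y (η*s), p ∉ frontier Ω := by
      intro p hp hpF
      have : p ∈ closedBall y (η*s) ∩ frontier Ω := ⟨hp, hpF⟩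
      rw [hbF] at this
      exact this
    have hBΩ : closedBall y (η*s) ⊆ Ω := by
      apply IsPreconnected.subset_left_of_subset_union hΩopen
        isClosed_closure.isOpen_compl hdisj
      · intro p hp
        exact hcompl p (hballF p hp)
      · obtain ⟨p, hp1, hp2⟩ := hBne
        refine ⟨p, hp1, ?_⟩
        rcases hcompl p (hballF p hp1) with h | h
        · exact h
        · exact absurd hp2 h
      · exact (convex_closedBall y (η*s)).isPreconnected
    have hQisub : Qi ⊆ Ω := by
      intro z hz
      apply hBΩ
      rw [mem_closedBall]
      have := hQiball z hz
      nlinarith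
    have hQicube : IsCube Qi l :=
      ⟨hl0, (WithLp.toLp 2 (fun i => y i - l/2) : EuclideanSpace ℝ (Fin n)), rfl⟩
    have hQine : Qi.Nonempty := ⟨y, hyQi⟩
    -- apply E-thickness
    have h1 : η / (2*n) * δ ≤ l := by
      have := mul_le_mul_of_nonneg_left hj2 (le_of_lt (by positivity : (0:ℝ) < η/(2*n)))
      calc η / (2*n) * δ ≤ η/(2*n) * (2*s) := this
        _ = l := by rw [hldef]; field_simp
    have h2 : l ≤ 1 * δ := by
      rw [one_mul, hldef]
      have : η * s / n ≤ η * s := by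
        apply div_le_self (by positivity) hn1
      nlinarith
    have h3 : η/4 * δ ≤ setDist Qi (frontier Ω) := by
      apply le_setDist hQine hFne
      intro p hp w hw
      have hd1 := hQiball p hp
      have hd2 := hyF w hw
      have htri : dist y w ≤ dist y p + dist p w := dist_triangle y p w
      rw [dist_comm y p] at htri
      nlinarith
    have h4 : setDist Qi (frontier Ω) ≤ 1 * δ := by
      rw [one_mul]
      calc setDist Qi (frontier Ω) ≤ dist y x := setDist_le_dist hyQi hx
        _ ≤ s := hdyx
        _ ≤ δ := hj1
    obtain ⟨Qe, l', ⟨hl'0, a', hQe⟩, hQesub, h5, h6, h7, h8, h9⟩ :=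
      hP j (Nat.zero_le j) Qi l hQicube hQisub h1 h2 h3 h4
    rw [← hδdef] at h5 h6 h7 h9
    -- center of exterior cube
    obtain ⟨z, hzi⟩ : ∃ z : EuclideanSpace ℝ (Fin n), ∀ i, z i = a' i + l'/2 :=
      ⟨WithLp.toLp 2 (fun i => a' i + l'/2), fun i => rfl⟩
    have hzQe : z ∈ Qe := by
      rw [hQe]
      intro i
      rw [hzi i]
      exact ⟨by linarith, by linarith⟩
    have hzF : ∀ w ∈ frontier Ω, c₇ * δ ≤ dist z w := by
      intro w hw
      exact le_trans h7 (setDist_le_dist hzQe hw)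
    set ρ : ℝ := c₇ * δ / 2 with hρdef
    have hρ0 : 0 < ρ := by positivity
    -- the ball around z misses the frontier
    have hzballF : ∀ p ∈ closedBall z ρ, p ∉ frontier Ω := by
      intro p hp hpF
      have h1' := hzF p hpF
      rw [mem_closedBall, dist_comm] at hp
      have hpos : 0 < c₇ * δ := by positivity
      rw [hρdef] at hp
      linarith
    have hznΩ : z ∈ (closure Ω)ᶜ := by
      intro hzc
      have hzΩc : z ∈ Ωᶜ := hQesub hzQe
      have : z ∈ frontier Ω := hfr ▸ ⟨hzc, hzΩc⟩
      have := hzF z this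
      simp at this
      nlinarith
    have hzball : closedBall z ρ ⊆ (closure Ω)ᶜ := by
      apply IsPreconnected.subset_left_of_subset_union
        isClosed_closure.isOpen_compl hΩopen hdisj.symm
      · intro p hp
        rcases hcompl p (hzballF p hp) with h | h
        · exact Or.inr h
        · exact Or.inl h
      · exact ⟨z, mem_closedBall_self (le_of_lt hρ0), hznΩ⟩
      · exact (convex_closedBall z ρ).isPreconnected
    -- distance from z to x
    have hQene : Qe.Nonempty := ⟨z, hzQe⟩
    obtain ⟨p, hp, q, hq, hpq⟩ := exists_dist_lt hQine hQene
      (lt_of_le_of_lt h9 (by nlinarith : c₈ * δ < 2 * c₈ * δ))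
    have hzq : dist z q ≤ (n:ℝ) * l' := by
      apply aux_dist_le (le_of_lt hl'0)
      intro i
      rw [hQe] at hq
      obtain ⟨hq1, hq2⟩ := hq i
      rw [abs_le, hzi i]
      exact ⟨by linarith, by linarith⟩
    have hpy : dist p y ≤ η * s / 2 := hQiball p hp
    have hzx : dist z x ≤ ((n:ℝ)*c₆ + 2*c₈) * δ + 2 * s := by
      have htri : dist z x ≤ dist z q + dist q p + dist p y + dist y x := by
        have t0 := dist_triangle z p x
        have t1 := dist_triangle z q p
        have t2 := dist_triangle p y x
        linarith
      have hql : dist z q ≤ (n:ℝ) * (c₆ * δ) := by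
        calc dist z q ≤ (n:ℝ) * l' := hzq
          _ ≤ (n:ℝ) * (c₆ * δ) := by
              apply mul_le_mul_of_nonneg_left _ (le_of_lt hn0)
              linarith
      rw [dist_comm q p] at htri
      have hη1s : η * s / 2 ≤ s := by nlinarith
      linarith
    have hcont : closedBall z ρ ⊆ closedBall x r := by
      apply closedBall_subset_closedBall'
      have hδ2s : δ ≤ 2*s := hj2
      have : ((n:ℝ)*c₆ + 2*c₈) * δ ≤ ((n:ℝ)*c₆ + 2*c₈) * (2*s) := by
        apply mul_le_mul_of_nonneg_left hδ2s
        positivity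
      have hρs : ρ ≤ c₇ * s := by
        rw [hρdef]
        have := mul_le_mul_of_nonneg_left hj2 (le_of_lt hc7)
        linarith
      calc ρ + dist z x ≤ c₇ * s + (((n:ℝ)*c₆ + 2*c₈) * (2*s) + 2*s) := by linarith
        _ ≤ C * s := by rw [hCdef]; nlinarith [hs0.le]
        _ = r := hCs
    refine ⟨z, ?_, ?_⟩
    · have hη'ρ : η' * r ≤ ρ := by
        have h1' : η' ≤ c₇/(2*C) := le_trans (min_le_left _ _) (min_le_right _ _)
        have heq : (c₇/(2*C)) * r = c₇ * s / 2 := by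
          rw [← hCs]
          field_simp [hC0.ne']
        have hsδ2 : c₇ * s / 2 ≤ ρ := by
          rw [hρdef]
          have := mul_le_mul_of_nonneg_left hj1 (le_of_lt hc7)
          linarith
        have := mul_le_mul_of_nonneg_right h1' (le_of_lt hr0)
        linarith
      exact subset_trans (closedBall_subset_closedBall hη'ρ) hcont
    · have hη'ρ : η' * r ≤ ρ := by
        have h1' : η' ≤ c₇/(2*C) := le_trans (min_le_left _ _) (min_le_right _ _)
        have heq : (c₇/(2*C)) * r = c₇ * s / 2 := by
          rw [← hCs]
          field_simp [hC0.ne']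
        have hsδ2 : c₇ * s / 2 ≤ ρ := by
          rw [hρdef]
          have := mul_le_mul_of_nonneg_left hj1 (le_of_lt hc7)
          linarith
        have := mul_le_mul_of_nonneg_right h1' (le_of_lt hr0)
        linarith
      have hsub : closedBall z (η'*r) ⊆ (closure Ω)ᶜ :=
        subset_trans (closedBall_subset_closedBall hη'ρ) hzball
      rw [Set.eq_empty_iff_forall_notMem]
      rintro p ⟨hp1, hp2⟩
      exact hsub hp1 hp2
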